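/- Let W be a finite set of weighted top-truncated ballots over candidates C, |C| = m, each ballot ranking some prefix of candidates. Under the round-up evaluation (ranked position i gives α_i, unranked gives α_m) of a scoring rule α₁ ≥ ... ≥ α_m, the ballot (p) alone maximizes p's score among all top-truncated ballots, and simultaneously minimizes every other candidate's score. Hence p can be made a co-winner by the manipulators iff all manipulators casting (p) makes p a co-winner. -/

import Mathlib

variable {C : Type*}

/-- Round-up score of candidate `c` from one top-truncated ballot `l` under the scoring
vector `α` (for `m` candidates): ranked position `i` (0-indexed) gives `α i`, and
unranked candidates get `α (m - 1)`. -/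
def ruBallotScore [DecidableEq C] (α : ℕ → ℝ) (m : ℕ) (l : List C) (c : C) : ℝ :=
  if c ∈ l then α (l.idxOf c) else α (m - 1)

/-- Total round-up score of `c`: the non-manipulators `S` plus manipulators of weights
`w` casting the ballots `b`. -/
def ruScore [Fintype C] [DecidableEq C] (α : ℕ → ℝ) (S : List (ℕ × List C))
    {n : ℕ} (w : Fin n → ℕ) (b : Fin n → List C) (c : C) : ℝ :=
  (S.map fun wb => (wb.1 : ℝ) * ruBallotScore α (Fintype.card C) wb.2 c).sum +
    ∑ i, (w i : ℝ) * ruBallotScore α (Fintype.card C) (b i) c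

lemma ruBallot_self [DecidableEq C] (α : ℕ → ℝ) (m : ℕ) (p : C) :
    ruBallotScore α m [p] p = α 0 := by
  simp [ruBallotScore]

lemma ruBallot_other [DecidableEq C] (α : ℕ → ℝ) (m : ℕ) {p c : C} (h : c ≠ p) :
    ruBallotScore α m [p] c = α (m - 1) := by
  simp [ruBallotScore, h]

lemma ruBallot_le_top [DecidableEq C] (α : ℕ → ℝ) (hα : Antitone α) (m : ℕ)
    (l : List C) (p : C) :
    ruBallotScore α m l p ≤ ruBallotScore α m [p] p := by
  rw [ruBallot_self]
  unfold ruBallotScore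
  split <;> exact hα (Nat.zero_le _)

lemma bot_le_ruBallot [DecidableEq C] (α : ℕ → ℝ) (hα : Antitone α) (m : ℕ)
    {l : List C} (hl : l.length ≤ m) {p c : C} (h : c ≠ p) :
    ruBallotScore α m [p] c ≤ ruBallotScore α m l c := by
  rw [ruBallot_other α m h]
  unfold ruBallotScore
  split
  · rename_i hc
    apply hα
    have := List.idxOf_lt_length_iff.mpr hc
    omega
  · exact le_refl _

/-- For a scoring rule with round-up evaluation: among all top-truncated ballots,
the ballot `(p)` maximizes `p`'s score and minimizes every other candidate's score;
hence `p` can be made a co-winner by the manipulators iff all manipulators casting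
`(p)` makes `p` a co-winner. -/
theorem roundUp_plurality_like [Fintype C] [DecidableEq C]
    (α : ℕ → ℝ) (hα : Antitone α) (p : C)
    (S : List (ℕ × List C)) (n : ℕ) (w : Fin n → ℕ) :
    (∀ l : List C, l.Nodup → l.length ≤ Fintype.card C →
      ruBallotScore α (Fintype.card C) l p ≤ ruBallotScore α (Fintype.card C) [p] p ∧
      ∀ c, c ≠ p →
        ruBallotScore α (Fintype.card C) [p] c ≤ ruBallotScore α (Fintype.card C) l c) ∧
    ((∃ b : Fin n → List C,
        (∀ i, (b i).Nodup ∧ (b i).length ≤ Fintype.card C) ∧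
        ∀ c, ruScore α S w b c ≤ ruScore α S w b p) ↔
      (∀ c, ruScore α S w (fun _ => [p]) c ≤ ruScore α S w (fun _ => [p]) p)) := by
  constructor
  · intro l _ hlen
    exact ⟨ruBallot_le_top α hα _ l p, fun c hc => bot_le_ruBallot α hα _ hlen hc⟩
  constructor
  · rintro ⟨b, hb, hwin⟩ c
    by_cases hc : c = p
    · subst hc; exact le_refl _
    · have h1 : ruScore α S w (fun _ => [p]) c ≤ ruScore α S w b c := by
        unfold ruScore
        refine add_le_add le_rfl (Finset.sum_le_sum fun i _ => ?_)
        exact mul_le_mul_of_nonneg_left (bot_le_ruBallot α hα _ (hb i).2 hc)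
          (Nat.cast_nonneg _)
      have h2 : ruScore α S w b p ≤ ruScore α S w (fun _ => [p]) p := by
        unfold ruScore
        refine add_le_add le_rfl (Finset.sum_le_sum fun i _ => ?_)
        exact mul_le_mul_of_nonneg_left (ruBallot_le_top α hα _ _ p) (Nat.cast_nonneg _)
      exact h1.trans ((hwin c).trans h2)
  · intro h
    refine ⟨fun _ => [p], fun i => ⟨List.nodup_singleton p, ?_⟩, h⟩
    simp only [List.length_singleton]; exact Fintype.card_pos_iff.mpr ⟨p⟩
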